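/- The geodesic circle {x ∈ ℍ² : x₃ = a}, a > 1, has constant geodesic curvature a/√(a²-1) > 1. Hence the torus T̂_{a,â} = {(x,y) ∈ ℍ²×ℍ² : x₃ = a, y₃ = â} with 1 < a ≤ â has 4|H|² = a²/(a²-1) + â²/(â²-1) > 2, i.e. |H|² > 1/2. -/

import Mathlib

/-- Lorentz inner product on ℝ³₁. -/
def lorentzInner (u v : Fin 3 → ℝ) : ℝ := u 0 * v 0 + u 1 * v 1 - u 2 * v 2

/-- The geodesic circle `{x ∈ ℍ² : x₃ = a}`, `a > 1`, in its unit-speed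
parametrization `γ`, has constant geodesic curvature `a/√(a²-1) > 1`; hence the
torus product of two such circles with `1 < a ≤ â` and `4|H|² = k_α² + k_β²`
satisfies `4|H|² = a²/(a²-1) + â²/(â²-1) > 2`, i.e. `|H|² > 1/2`. -/
theorem stmt8 (a a' : ℝ) (ha : 1 < a) (haa' : a ≤ a')
    (γ : ℝ → Fin 3 → ℝ)
    (hγ : γ = fun t => ![Real.sqrt (a ^ 2 - 1) * Real.cos (t / Real.sqrt (a ^ 2 - 1)),
      Real.sqrt (a ^ 2 - 1) * Real.sin (t / Real.sqrt (a ^ 2 - 1)), a])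
    (Hsq : ℝ)
    (hH : 4 * Hsq = a ^ 2 / (a ^ 2 - 1) + a' ^ 2 / (a' ^ 2 - 1)) :
    (∀ t, lorentzInner (γ t) (γ t) = -1 ∧ 0 < γ t 2) ∧
    (∀ t, lorentzInner (deriv γ t) (deriv γ t) = 1) ∧
    (∀ t, lorentzInner (deriv (deriv γ) t - γ t) (deriv (deriv γ) t - γ t) =
      (a / Real.sqrt (a ^ 2 - 1)) ^ 2) ∧
    1 < a / Real.sqrt (a ^ 2 - 1) ∧
    2 < 4 * Hsq ∧ 1 / 2 < Hsq := by
  set r := Real.sqrt (a ^ 2 - 1) with hrdef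
  have hpos : (0:ℝ) < a ^ 2 - 1 := by nlinarith
  have hr : 0 < r := Real.sqrt_pos.2 hpos
  have hr2 : r ^ 2 = a ^ 2 - 1 := Real.sq_sqrt hpos.le
  have hrne : r ≠ 0 := hr.ne'
  -- first derivative
  have hd1 : deriv γ = fun t => ![-Real.sin (t / r), Real.cos (t / r), 0] := by
    funext t
    have h : HasDerivAt γ (![-Real.sin (t / r), Real.cos (t / r), 0]) t := by
      rw [hγ]
      apply hasDerivAt_pi.2
      intro i
      fin_cases i
      · have h1 : HasDerivAt (fun x : ℝ => x / r) (1 / r) t := (hasDerivAt_id t).div_const r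
        have h2 := (Real.hasDerivAt_cos (t / r)).comp t h1
        have h3 := h2.const_mul r
        simp only [Fin.zero_eta, Fin.isValue, Matrix.cons_val_zero]
        refine h3.congr_deriv ?_
        field_simp [hrne]
      · have h1 : HasDerivAt (fun x : ℝ => x / r) (1 / r) t := (hasDerivAt_id t).div_const r
        have h2 := (Real.hasDerivAt_sin (t / r)).comp t h1
        have h3 := h2.const_mul r
        simp only [Fin.mk_one, Fin.isValue, Matrix.cons_val_one, Matrix.head_cons, Matrix.cons_val_zero]
        refine h3.congr_deriv ?_
        field_simp [hrne]
      · simpa using (hasDerivAt_const t a)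
    exact h.deriv
  -- second derivative
  have hd2 : deriv (deriv γ) = fun t =>
      ![-(Real.cos (t / r) / r), -(Real.sin (t / r) / r), 0] := by
    funext t
    have h : HasDerivAt (deriv γ) (![-(Real.cos (t / r) / r), -(Real.sin (t / r) / r), 0]) t := by
      rw [hd1]
      apply hasDerivAt_pi.2
      intro i
      fin_cases i
      · have h1 : HasDerivAt (fun x : ℝ => x / r) (1 / r) t := (hasDerivAt_id t).div_const r
        have h2 := ((Real.hasDerivAt_sin (t / r)).comp t h1).neg
        simp only [Fin.zero_eta, Fin.isValue, Matrix.cons_val_zero]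
        refine h2.congr_deriv ?_
        field_simp [hrne]
      · have h1 : HasDerivAt (fun x : ℝ => x / r) (1 / r) t := (hasDerivAt_id t).div_const r
        have h2 := (Real.hasDerivAt_cos (t / r)).comp t h1
        simp only [Fin.mk_one, Fin.isValue, Matrix.cons_val_one, Matrix.head_cons, Matrix.cons_val_zero]
        refine h2.congr_deriv ?_
        field_simp [hrne]
      · simpa using (hasDerivAt_const t (0:ℝ))
    exact h.deriv
  have hpyth : ∀ t : ℝ, Real.sin (t / r) ^ 2 + Real.cos (t / r) ^ 2 = 1 :=
    fun t => Real.sin_sq_add_cos_sq (t / r)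
  refine ⟨?_, ?_, ?_, ?_, ?_, ?_⟩
  · intro t
    constructor
    · have := hpyth t
      simp only [hγ, lorentzInner, Matrix.cons_val_zero, Matrix.cons_val_one, Matrix.head_cons,
        Matrix.cons_val_two, Matrix.tail_cons]
      nlinarith [this, hr2]
    · simp [hγ]; linarith
  · intro t
    have := hpyth t
    simp only [hd1, lorentzInner, Matrix.cons_val_zero, Matrix.cons_val_one, Matrix.head_cons,
      Matrix.cons_val_two, Matrix.tail_cons]
    nlinarith [this]
  · intro t
    have hp := hpyth t
    simp only [lorentzInner, Pi.sub_apply]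
    rw [hd2, hγ]
    simp only [Matrix.cons_val_zero, Matrix.cons_val_one, Matrix.head_cons,
      Matrix.cons_val_two, Matrix.tail_cons]
    field_simp
    linear_combination (1 + r ^ 2) ^ 2 * hp + (1 + r ^ 2) * hr2
  · rw [lt_div_iff₀ hr, one_mul]
    nlinarith [hr2]
  · have ha' : 1 < a' := lt_of_lt_of_le ha haa'
    have h1 : 1 < a ^ 2 / (a ^ 2 - 1) := by
      rw [lt_div_iff₀ hpos]; nlinarith
    have hpos' : (0:ℝ) < a' ^ 2 - 1 := by nlinarith
    have h2 : 1 < a' ^ 2 / (a' ^ 2 - 1) := by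
      rw [lt_div_iff₀ hpos']; nlinarith
    linarith [hH, h1, h2]
  · have ha' : 1 < a' := lt_of_lt_of_le ha haa'
    have h1 : 1 < a ^ 2 / (a ^ 2 - 1) := by
      rw [lt_div_iff₀ hpos]; nlinarith
    have hpos' : (0:ℝ) < a' ^ 2 - 1 := by nlinarith
    have h2 : 1 < a' ^ 2 / (a' ^ 2 - 1) := by
      rw [lt_div_iff₀ hpos']; nlinarith
    linarith [hH, h1, h2]
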